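/- Let (R, 𝔪) be an Artinian local commutative ring of mixed characteristic whose residue field κ = R/𝔪 is algebraically closed of characteristic p > 0, and let q = p^N with N sufficiently large. Fix a minimal system of generators x = (x₁, …, x_μ) of 𝔪 and a monomial ordering ≤ on ℕ^μ; let Δ_R = {α ∈ ℕ^μ : x^α ∉ 𝔞(α)}, where 𝔞(α) is the ideal generated by all x^β with β > α. Then: (1) every r ∈ R can be written as r = Σ_{α ∈ Δ_R} a_α^q x^α with a_α ∈ R, and the coefficients a_α^q ∈ W are uniquely determined by r (i.e., the monomials {x^α : α ∈ Δ_R} form a Witt base of R); (2) the ideals 𝔞(α), for α running over Δ_R from the largest to the smallest index, form a maximal strictly ascending chain of ideals of R, and hence the cardinality of Δ_R equals the length ℓ(R). -/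

import Mathlib

open scoped Classical


open IsLocalRing

/-- The length of a commutative ring as a module over itself, i.e. the supremum of the
lengths of strictly increasing chains of ideals (Krull dimension of the ideal lattice). -/
noncomputable def ringLength (R : Type*) [CommRing R] : WithBot ℕ∞ :=
  Order.krullDim (Ideal R)

/-- The ideal `𝔞(α)` generated by the monomials `x^β` in the generators `x` of the maximal
ideal, for `β > α` in a given monomial ordering. -/
def monIdeal {R : Type u} [CommRing R] {μ : ℕ} (x : Fin μ → R)
    (mo : LinearOrder (Fin μ → ℕ)) (α : Fin μ → ℕ) : Ideal R :=
  Ideal.span {r | ∃ β, mo.lt α β ∧ r = ∏ i, x i ^ β i}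

/-- `Δ(R, x, ≤)`: the set of exponents `α` such that `x^α ∉ 𝔞(α)`. -/
def monDelta {R : Type u} [CommRing R] {μ : ℕ} (x : Fin μ → R)
    (mo : LinearOrder (Fin μ → ℕ)) : Set (Fin μ → ℕ) :=
  {α | (∏ i, x i ^ α i) ∉ monIdeal x mo α}

namespace Stmt16Aux

section order
variable {μ : ℕ} (mo : LinearOrder (Fin μ → ℕ))

lemma mole_of_molt {a b} (h : mo.lt a b) : mo.le a b := ((mo.lt_iff_le_not_ge a b).1 h).1
lemma molt_of_le_ne {a b} (h : mo.le a b) (hne : a ≠ b) : mo.lt a b :=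
  (mo.lt_iff_le_not_ge a b).2 ⟨h, fun h' => hne (mo.le_antisymm _ _ h h')⟩
lemma molt_irrefl (a) : ¬ mo.lt a a := fun h => ((mo.lt_iff_le_not_ge a a).1 h).2 (mo.le_refl a)
lemma molt_of_mole_of_molt {a b c} (h : mo.le a b) (h' : mo.lt b c) : mo.lt a c := by
  obtain ⟨h1, h2⟩ := (mo.lt_iff_le_not_ge b c).1 h'
  exact (mo.lt_iff_le_not_ge a c).2 ⟨mo.le_trans _ _ _ h h1,
    fun hca => h2 (mo.le_trans _ _ _ hca h)⟩
lemma molt_of_molt_of_mole {a b c} (h : mo.lt a b) (h' : mo.le b c) : mo.lt a c := by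
  obtain ⟨h1, h2⟩ := (mo.lt_iff_le_not_ge a b).1 h
  exact (mo.lt_iff_le_not_ge a c).2 ⟨mo.le_trans _ _ _ h1 h',
    fun hca => h2 (mo.le_trans _ _ _ h' hca)⟩
lemma molt_trans {a b c} (h : mo.lt a b) (h' : mo.lt b c) : mo.lt a c :=
  molt_of_mole_of_molt mo (mole_of_molt mo h) h'
lemma molt_ne {a b} (h : mo.lt a b) : a ≠ b := by
  rintro rfl; exact molt_irrefl mo a h
lemma mole_of_not_lt {a b} (h : ¬ mo.lt a b) : mo.le b a := by
  rcases mo.le_total b a with h' | h'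
  · exact h'
  · rcases eq_or_ne a b with rfl | hne
    · exact mo.le_refl a
    · exact absurd (molt_of_le_ne mo h' hne) h
lemma mole_iff_lt_or_eq {a b} : mo.le a b ↔ mo.lt a b ∨ a = b := by
  constructor
  · intro h
    rcases eq_or_ne a b with rfl | hne
    · exact Or.inr rfl
    · exact Or.inl (molt_of_le_ne mo h hne)
  · rintro (h | rfl)
    · exact mole_of_molt mo h
    · exact mo.le_refl a

variable (h0 : ∀ α : Fin μ → ℕ, mo.le 0 α)
  (hadd : ∀ α β γ : Fin μ → ℕ, mo.le α β → mo.le (α + γ) (β + γ))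

include h0 hadd in
lemma mole_add_right (α γ : Fin μ → ℕ) : mo.le α (α + γ) := by
  have := hadd 0 γ α (h0 γ)
  simpa [add_comm] using this

include h0 hadd in
lemma molt_add_right (α γ : Fin μ → ℕ) (hγ : γ ≠ 0) : mo.lt α (α + γ) := by
  refine molt_of_le_ne mo (mole_add_right mo h0 hadd α γ) fun h => hγ ?_
  have := h.symm
  rwa [add_eq_left] at this

end order

variable {R : Type u} [CommRing R] {μ : ℕ} (x : Fin μ → R) (mo : LinearOrder (Fin μ → ℕ))

/-- the monomial `x^α` -/
def mon (α : Fin μ → ℕ) : R := ∏ i, x i ^ α i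

lemma mon_add (α β : Fin μ → ℕ) : mon x (α + β) = mon x α * mon x β := by
  simp [mon, pow_add, Finset.prod_mul_distrib]

lemma mon_zero : mon x 0 = 1 := by simp [mon]

lemma mon_single (i : Fin μ) : mon x (Pi.single i 1) = x i := by
  unfold mon
  rw [Finset.prod_eq_single i]
  · simp
  · intro b _ hb; simp [Pi.single_eq_of_ne hb]
  · simp

/-- the ideal generated by monomials `x^β`, `β ≥ α` -/
def monB (α : Fin μ → ℕ) : Ideal R :=
  Ideal.span {r | ∃ β, mo.le α β ∧ r = mon x β}

lemma monIdeal_eq_span' (α : Fin μ → ℕ) :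
    monIdeal x mo α = Ideal.span {r | ∃ β, mo.lt α β ∧ r = mon x β} := rfl

lemma mon_mem_monIdeal_of_lt {α β} (h : mo.lt α β) : mon x β ∈ monIdeal x mo α :=
  Ideal.subset_span ⟨β, h, rfl⟩

lemma monIdeal_le_monB (α) : monIdeal x mo α ≤ monB x mo α := by
  rw [monIdeal_eq_span']
  exact Ideal.span_mono fun r ⟨β, hβ, hr⟩ => ⟨β, mole_of_molt mo hβ, hr⟩

lemma mon_mem_monB (α) : mon x α ∈ monB x mo α := Ideal.subset_span ⟨α, mo.le_refl α, rfl⟩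

lemma monB_le_monIdeal_of_lt {α β} (h : mo.lt α β) : monB x mo β ≤ monIdeal x mo α := by
  rw [monIdeal_eq_span']
  exact Ideal.span_le.2 fun r ⟨δ, hδ, hr⟩ =>
    Ideal.subset_span ⟨δ, molt_of_molt_of_mole mo h hδ, hr⟩

lemma monIdeal_mono {α β} (h : mo.le α β) : monIdeal x mo β ≤ monIdeal x mo α := by
  rw [monIdeal_eq_span', monIdeal_eq_span']
  exact Ideal.span_mono fun r ⟨δ, hδ, hr⟩ => ⟨δ, molt_of_mole_of_molt mo h hδ, hr⟩

lemma monB_eq_sup (α) : monB x mo α = Ideal.span {mon x α} ⊔ monIdeal x mo α := by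
  rw [monIdeal_eq_span', ← Ideal.span_union, monB]
  congr 1
  ext r
  simp only [Set.mem_union, Set.mem_singleton_iff, Set.mem_setOf_eq]
  constructor
  · rintro ⟨β, hβ, rfl⟩
    rcases (mole_iff_lt_or_eq mo).1 hβ with h | rfl
    · exact Or.inr ⟨β, h, rfl⟩
    · exact Or.inl rfl
  · rintro (rfl | ⟨β, hβ, rfl⟩)
    · exact ⟨α, mo.le_refl α, rfl⟩
    · exact ⟨β, mole_of_molt mo hβ, rfl⟩

lemma mem_monB_decompose {α r} (hr : r ∈ monB x mo α) :
    ∃ c m, m ∈ monIdeal x mo α ∧ r = c * mon x α + m := by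
  rw [monB_eq_sup] at hr
  obtain ⟨s, hs, m, hm, hr'⟩ := Submodule.mem_sup.1 hr
  obtain ⟨c, hc⟩ := Ideal.mem_span_singleton'.1 hs
  exact ⟨c, m, hm, by rw [← hr', ← hc]⟩


-- PART C


variable (h0 : ∀ α : Fin μ → ℕ, mo.le 0 α)
  (hadd : ∀ α β γ : Fin μ → ℕ, mo.le α β → mo.le (α + γ) (β + γ))
  [IsLocalRing R] (hgen : Ideal.span (Set.range x) = maximalIdeal R)

include hgen in
lemma x_mem_maximalIdeal (i : Fin μ) : x i ∈ maximalIdeal R :=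
  hgen ▸ Ideal.subset_span ⟨i, rfl⟩

include hgen in
lemma mon_mem_maximalIdeal {β : Fin μ → ℕ} (hβ : β ≠ 0) : mon x β ∈ maximalIdeal R := by
  obtain ⟨i, hi⟩ := Function.ne_iff.1 hβ
  have hd : β = Pi.single i 1 + (β - Pi.single i 1) := by
    funext j
    rcases eq_or_ne j i with rfl | hne
    · simp only [Pi.add_apply, Pi.sub_apply, Pi.single_eq_same]
      have : 1 ≤ β j := Nat.one_le_iff_ne_zero.2 (by simpa using hi)
      omega
    · simp [Pi.single_eq_of_ne hne]
  rw [hd, mon_add, mon_single]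
  exact Ideal.mul_mem_right _ _ (x_mem_maximalIdeal x hgen i)

include h0 hgen in
lemma monIdeal_le_maximalIdeal (α) : monIdeal x mo α ≤ maximalIdeal R := by
  rw [monIdeal_eq_span']
  refine Ideal.span_le.2 ?_
  rintro r ⟨β, hβ, rfl⟩
  refine mon_mem_maximalIdeal x hgen fun h => ?_
  subst h
  exact molt_irrefl mo 0 (molt_of_mole_of_molt mo (h0 α) hβ)

include h0 hadd hgen in
lemma mul_monB_le (α) : maximalIdeal R * monB x mo α ≤ monIdeal x mo α := by
  rw [← hgen, monB, Ideal.span_mul_span']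
  refine Ideal.span_le.2 ?_
  rintro r ⟨xi, ⟨i, rfl⟩, s, ⟨β, hβ, rfl⟩, rfl⟩
  rw [monIdeal_eq_span']
  refine Ideal.subset_span ⟨β + Pi.single i 1, ?_, ?_⟩
  · refine molt_of_mole_of_molt mo hβ (molt_add_right mo h0 hadd β _ fun h => ?_)
    have := congrFun h i
    simp at this
  · rw [mon_add, mon_single, mul_comm]

include h0 hadd hgen in
lemma mem_maximalIdeal_mul_mon {c : R} (hc : c ∈ maximalIdeal R) (α) :
    c * mon x α ∈ monIdeal x mo α :=
  mul_monB_le x mo h0 hadd hgen α (Ideal.mul_mem_mul hc (mon_mem_monB x mo α))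

include h0 in
lemma monB_zero_eq_top : monB x mo 0 = ⊤ := by
  rw [Ideal.eq_top_iff_one]
  exact Ideal.subset_span ⟨0, mo.le_refl 0, (mon_zero x).symm⟩

section nilp
variable (e : ℕ) (hxe : ∀ i, x i ^ e = 0)

include hxe in
lemma mon_eq_zero {β : Fin μ → ℕ} (i : Fin μ) (hi : e ≤ β i) : mon x β = 0 := by
  refine Finset.prod_eq_zero (Finset.mem_univ i) ?_
  rw [show β i = e + (β i - e) by omega, pow_add, hxe i, zero_mul]

/-- finite box of potential exponents -/
def box : Finset (Fin μ → ℕ) := Fintype.piFinset fun _ => Finset.range e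

lemma mem_box {β : Fin μ → ℕ} : β ∈ box (μ := μ) e ↔ ∀ i, β i < e := by
  simp [box]

include hxe in
lemma mon_eq_zero_of_not_mem_box {β : Fin μ → ℕ} (hβ : β ∉ box (μ := μ) e) : mon x β = 0 := by
  rw [mem_box] at hβ
  push_neg at hβ
  obtain ⟨i, hi⟩ := hβ
  exact mon_eq_zero x e hxe i hi

/-- `Δ_R` as a finset -/
noncomputable def delta : Finset (Fin μ → ℕ) := (box e).filter (· ∈ monDelta x mo)

include hxe in
lemma mem_delta {δ : Fin μ → ℕ} : δ ∈ delta x mo e ↔ δ ∈ monDelta x mo := by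
  rw [delta, Finset.mem_filter, and_iff_right_iff_imp]
  intro hδ
  by_contra hbox
  have h0' : mon x δ = 0 := mon_eq_zero_of_not_mem_box x e hxe hbox
  exact hδ (show (∏ i, x i ^ δ i) ∈ monIdeal x mo δ by
    rw [show (∏ i, x i ^ δ i) = mon x δ from rfl, h0']; exact Ideal.zero_mem _)

include hxe in
lemma coe_delta : (delta x mo e : Set (Fin μ → ℕ)) = monDelta x mo := by
  ext δ
  rw [Finset.mem_coe, mem_delta x mo e hxe]

include hxe in
lemma mon_mem_spanDelta :
    ∀ (n : ℕ) (γ : Fin μ → ℕ), ((box (μ := μ) e).filter (fun δ => mo.lt γ δ)).card ≤ n →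
    mon x γ ∈ Ideal.span {r : R | ∃ δ, δ ∈ monDelta x mo ∧ mo.le γ δ ∧ r = mon x δ} := by
  intro n
  induction n using Nat.strong_induction_on with
  | _ n IH =>
  intro γ hcard
  by_cases hγΔ : γ ∈ monDelta x mo
  · exact Ideal.subset_span ⟨γ, hγΔ, mo.le_refl γ, rfl⟩
  have hγA : mon x γ ∈ monIdeal x mo γ := not_not.1 hγΔ
  rw [monIdeal_eq_span' x mo γ] at hγA
  refine Ideal.span_le.2 ?_ hγA
  rintro r ⟨β, hβ, rfl⟩
  refine SetLike.mem_coe.2 ?_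
  by_cases hbox : β ∈ box (μ := μ) e
  · have hsub : (box (μ := μ) e).filter (fun δ => mo.lt β δ) ⊆
        (box (μ := μ) e).filter (fun δ => mo.lt γ δ) := by
      intro δ hδ
      rw [Finset.mem_filter] at hδ ⊢
      exact ⟨hδ.1, molt_trans mo hβ hδ.2⟩
    have hss : (box (μ := μ) e).filter (fun δ => mo.lt β δ) ⊂
        (box (μ := μ) e).filter (fun δ => mo.lt γ δ) := by
      refine ⟨hsub, fun hsub' => ?_⟩
      have := hsub' (Finset.mem_filter.2 ⟨hbox, hβ⟩)
      rw [Finset.mem_filter] at this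
      exact molt_irrefl mo β this.2
    have hlt : ((box (μ := μ) e).filter (fun δ => mo.lt β δ)).card < n :=
      lt_of_lt_of_le (Finset.card_lt_card hss) hcard
    have := IH _ hlt β (le_refl _)
    refine Ideal.span_mono ?_ this
    rintro r ⟨δ, h1, h2, rfl⟩
    exact ⟨δ, h1, mole_of_molt mo (molt_of_molt_of_mole mo hβ h2), rfl⟩
  · rw [mon_eq_zero_of_not_mem_box x e hxe hbox]
    exact Ideal.zero_mem _

include hxe in
lemma monIdeal_eq_spanDelta (γ) : monIdeal x mo γ =
    Ideal.span {r : R | ∃ δ, δ ∈ monDelta x mo ∧ mo.lt γ δ ∧ r = mon x δ} := by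
  apply le_antisymm
  · rw [monIdeal_eq_span']
    refine Ideal.span_le.2 ?_
    rintro r ⟨β, hβ, rfl⟩
    have := mon_mem_spanDelta x mo e hxe _ β (le_refl _)
    refine Ideal.span_mono ?_ this
    rintro r ⟨δ, h1, h2, rfl⟩
    exact ⟨δ, h1, molt_of_molt_of_mole mo hβ h2, rfl⟩
  · rw [monIdeal_eq_span']
    exact Ideal.span_mono fun r ⟨δ, _, h2, hr⟩ => ⟨δ, h2, hr⟩

include hxe in
lemma monIdeal_le_monB_min {γ δ0} (hδ0 : δ0 ∈ (delta x mo e).filter (fun δ => mo.lt γ δ))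
    (hmin : ∀ δ ∈ (delta x mo e).filter (fun δ => mo.lt γ δ), mo.le δ0 δ) :
    monIdeal x mo γ ≤ monB x mo δ0 := by
  rw [monIdeal_eq_spanDelta x mo e hxe γ]
  refine Ideal.span_le.2 ?_
  rintro r ⟨δ, hΔ, hltδ, rfl⟩
  exact Ideal.subset_span ⟨δ,
    hmin δ (Finset.mem_filter.2 ⟨(mem_delta x mo e hxe).2 hΔ, hltδ⟩), rfl⟩

include hxe in
lemma monIdeal_eq_bot {γ} (h : (delta x mo e).filter (fun δ => mo.lt γ δ) = ∅) :
    monIdeal x mo γ = ⊥ := by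
  rw [monIdeal_eq_spanDelta x mo e hxe γ]
  have hempty : {r : R | ∃ δ, δ ∈ monDelta x mo ∧ mo.lt γ δ ∧ r = mon x δ} = ∅ := by
    ext r
    simp only [Set.mem_setOf_eq, Set.mem_empty_iff_false, iff_false, not_exists]
    rintro δ ⟨h1, h2, rfl⟩
    exact absurd (Finset.mem_filter.2 ⟨(mem_delta x mo e hxe).2 h1, h2⟩)
      (by rw [h]; exact Finset.notMem_empty δ)
  rw [hempty, Ideal.span_empty]

include hxe in
lemma filter_le_eq_insert {γ} (hγ : γ ∈ monDelta x mo) :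
    (delta x mo e).filter (fun δ => mo.le γ δ) =
      insert γ ((delta x mo e).filter (fun δ => mo.lt γ δ)) := by
  ext α
  simp only [Finset.mem_filter, Finset.mem_insert]
  constructor
  · rintro ⟨h1, h2⟩
    rcases (mole_iff_lt_or_eq mo).1 h2 with h | rfl
    · exact Or.inr ⟨h1, h⟩
    · exact Or.inl rfl
  · rintro (rfl | ⟨h1, h2⟩)
    · exact ⟨(mem_delta x mo e hxe).2 hγ, mo.le_refl α⟩
    · exact ⟨h1, mole_of_molt mo h2⟩

include hxe in
lemma filter_le_eq_self {γ} (hγ : γ ∉ monDelta x mo) :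
    (delta x mo e).filter (fun δ => mo.le γ δ) =
      (delta x mo e).filter (fun δ => mo.lt γ δ) := by
  ext α
  simp only [Finset.mem_filter, and_congr_right_iff]
  intro hα
  constructor
  · intro h
    rcases (mole_iff_lt_or_eq mo).1 h with h | rfl
    · exact h
    · exact absurd ((mem_delta x mo e hxe).1 hα) hγ
  · exact mole_of_molt mo

include hxe in
lemma filter_min_eq {γ δ0} (hδ0 : δ0 ∈ (delta x mo e).filter (fun δ => mo.lt γ δ))
    (hmin : ∀ δ ∈ (delta x mo e).filter (fun δ => mo.lt γ δ), mo.le δ0 δ) :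
    (delta x mo e).filter (fun δ => mo.le δ0 δ) =
      (delta x mo e).filter (fun δ => mo.lt γ δ) := by
  rw [Finset.mem_filter] at hδ0
  ext α
  simp only [Finset.mem_filter, and_congr_right_iff]
  intro hα
  constructor
  · exact fun h => molt_of_molt_of_mole mo hδ0.2 h
  · intro h
    exact hmin α (Finset.mem_filter.2 ⟨hα, h⟩)

lemma filter_tail_card_lt {γ δ0} (hδ0 : δ0 ∈ (delta x mo e).filter (fun δ => mo.lt γ δ)) :
    ((delta x mo e).filter (fun δ => mo.lt δ0 δ)).card <
      ((delta x mo e).filter (fun δ => mo.lt γ δ)).card := by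
  rw [Finset.mem_filter] at hδ0
  refine Finset.card_lt_card ⟨?_, fun hsub' => ?_⟩
  · intro δ hδ
    rw [Finset.mem_filter] at hδ ⊢
    exact ⟨hδ.1, molt_trans mo hδ0.2 hδ.2⟩
  · have := hsub' (Finset.mem_filter.2 ⟨hδ0.1, hδ0.2⟩)
    rw [Finset.mem_filter] at this
    exact molt_irrefl mo δ0 this.2


omit hxe

include hxe in
lemma monIdeal_key {γ} (P : R → Prop) (hzero : P 0)
    (hnext : ∀ δ0, δ0 ∈ (delta x mo e).filter (fun δ => mo.lt γ δ) →
      (∀ δ ∈ (delta x mo e).filter (fun δ => mo.lt γ δ), mo.le δ0 δ) →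
      ((delta x mo e).filter (fun δ => mo.lt δ0 δ)).card <
        ((delta x mo e).filter (fun δ => mo.lt γ δ)).card →
      ∀ s ∈ monB x mo δ0, P s) :
    ∀ s ∈ monIdeal x mo γ, P s := by
  rcases Finset.eq_empty_or_nonempty ((delta x mo e).filter (fun δ => mo.lt γ δ)) with hemp | hne
  · intro s hs
    rw [monIdeal_eq_bot x mo e hxe hemp, Submodule.mem_bot] at hs
    rwa [hs]
  · letI := mo
    obtain ⟨δ0, hδ0, hδ0min⟩ := Finset.exists_min_image _ id hne
    intro s hs
    exact hnext δ0 hδ0 hδ0min (filter_tail_card_lt x mo e hδ0)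
      s (monIdeal_le_monB_min x mo e hxe hδ0 hδ0min hs)

/-- every residue has a `q`-th root modulo the maximal ideal -/
lemma exists_wittRoot [IsAlgClosed (ResidueField R)] {q : ℕ} (hq : 0 < q) (c : R) :
    ∃ a, c - a ^ q ∈ maximalIdeal R := by
  obtain ⟨z, hz⟩ := IsAlgClosed.exists_pow_nat_eq (residue R c) hq
  obtain ⟨a, rfl⟩ := residue_surjective z
  refine ⟨a, (residue_eq_zero_iff _).1 ?_⟩
  rw [map_sub, map_pow, hz, sub_self]

include h0 hadd hgen hxe in
lemma repr_exists [IsAlgClosed (ResidueField R)] {q : ℕ} (hqpos : 0 < q) :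
    ∀ (n : ℕ) (γ : Fin μ → ℕ), ((delta x mo e).filter (fun δ => mo.lt γ δ)).card ≤ n →
    ∀ r ∈ monB x mo γ, ∃ a : (Fin μ → ℕ) → R,
      r = ∑ α ∈ (delta x mo e).filter (fun δ => mo.le γ δ), a α ^ q * mon x α := by
  intro n
  induction n using Nat.strong_induction_on with
  | _ n IH =>
  intro γ hcard r hr
  have key : ∀ s ∈ monIdeal x mo γ, ∃ a : (Fin μ → ℕ) → R,
      s = ∑ α ∈ (delta x mo e).filter (fun δ => mo.lt γ δ), a α ^ q * mon x α := by
    refine monIdeal_key x mo e hxe _ ?_ ?_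
    · rcases Finset.eq_empty_or_nonempty ((delta x mo e).filter (fun δ => mo.lt γ δ)) with
        hemp | hne
      · exact ⟨0, by rw [hemp, Finset.sum_empty]⟩
      · exact ⟨0, by
          rw [Finset.sum_congr rfl fun α _ => by
            rw [show (0 : (Fin μ → ℕ) → R) α = 0 from rfl, zero_pow hqpos.ne', zero_mul]]
          rw [Finset.sum_const_zero]⟩
    · intro δ0 hδ0 hδ0min hlt s hs
      obtain ⟨a, ha⟩ := IH _ (lt_of_lt_of_le hlt hcard) δ0 (le_refl _) s hs
      refine ⟨a, ?_⟩
      rw [ha, filter_min_eq x mo e (hxe := hxe) hδ0 hδ0min]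
  obtain ⟨c, m, hm, hrcm⟩ := mem_monB_decompose x mo hr
  by_cases hγΔ : γ ∈ monDelta x mo
  · obtain ⟨a0, ha0⟩ := exists_wittRoot (R := R) hqpos c
    have h2 : (c - a0 ^ q) * mon x γ + m ∈ monIdeal x mo γ :=
      add_mem (mem_maximalIdeal_mul_mon x mo h0 hadd hgen ha0 γ) hm
    obtain ⟨b, hb⟩ := key _ h2
    refine ⟨Function.update b γ a0, ?_⟩
    rw [filter_le_eq_insert x mo e hxe hγΔ,
      Finset.sum_insert (by simp [molt_irrefl mo γ]), Function.update_self]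
    have hcongr : ∑ α ∈ (delta x mo e).filter (fun δ => mo.lt γ δ),
        Function.update b γ a0 α ^ q * mon x α =
        ∑ α ∈ (delta x mo e).filter (fun δ => mo.lt γ δ), b α ^ q * mon x α := by
      refine Finset.sum_congr rfl fun α hα => ?_
      rw [Finset.mem_filter] at hα
      rw [Function.update_of_ne (molt_ne mo hα.2).symm]
    rw [hcongr, ← hb, hrcm]
    ring
  · have hAll : c * mon x γ + m ∈ monIdeal x mo γ :=
      add_mem (Ideal.mul_mem_left _ _ (not_not.1 hγΔ)) hm
    obtain ⟨b, hb⟩ := key _ hAll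
    refine ⟨b, ?_⟩
    rw [filter_le_eq_self x mo e hxe hγΔ, ← hb, hrcm]

include h0 hadd hgen hxe in
lemma sandwich (I J : Ideal R) (hIJ : I ≤ J)
    (hD : ∀ α, α ∈ monDelta x mo → mon x α ∈ J ⊔ monIdeal x mo α →
      mon x α ∈ I ⊔ monIdeal x mo α) :
    ∀ (n : ℕ) (γ : Fin μ → ℕ), ((delta x mo e).filter (fun δ => mo.lt γ δ)).card ≤ n →
    ∀ r, r ∈ J → r ∈ monB x mo γ → r ∈ I := by
  intro n
  induction n using Nat.strong_induction_on with
  | _ n IH =>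
  intro γ hcard r hrJ hrB
  have key : ∀ s, s ∈ J → s ∈ monIdeal x mo γ → s ∈ I := by
    intro s hsJ hs
    revert hsJ
    refine monIdeal_key x mo e hxe (fun t => t ∈ J → t ∈ I) (fun _ => I.zero_mem) ?_ s hs
    intro δ0 _ _ hlt t ht htJ
    exact IH _ (lt_of_lt_of_le hlt hcard) δ0 (le_refl _) t htJ ht
  obtain ⟨c, m, hm, hrcm⟩ := mem_monB_decompose x mo hrB
  by_cases hγΔ : γ ∈ monDelta x mo
  · by_cases hc : c ∈ maximalIdeal R
    · refine key r hrJ ?_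
      rw [hrcm]
      exact add_mem (mem_maximalIdeal_mul_mon x mo h0 hadd hgen hc γ) hm
    · have hu : IsUnit c := by
        rwa [IsLocalRing.mem_maximalIdeal, mem_nonunits_iff, not_not] at hc
      have hmonJ : mon x γ ∈ J ⊔ monIdeal x mo γ := by
        have h1 : c * mon x γ ∈ J ⊔ monIdeal x mo γ := by
          have hcm' : c * mon x γ = r - m := by rw [hrcm]; ring
          rw [hcm']
          exact sub_mem (Submodule.mem_sup_left hrJ) (Submodule.mem_sup_right hm)
        exact (Ideal.unit_mul_mem_iff_mem _ hu).1 h1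
      obtain ⟨i, hi, m', hm', hsum⟩ := Submodule.mem_sup.1 (hD γ hγΔ hmonJ)
      have h5 : r - c * i ∈ monIdeal x mo γ := by
        have : r - c * i = c * m' + m := by
          rw [hrcm, show m' = mon x γ - i by rw [← hsum]; ring]
          ring
        rw [this]
        exact add_mem (Ideal.mul_mem_left _ _ hm') hm
      have h6 : r - c * i ∈ J := sub_mem hrJ (hIJ (I.mul_mem_left c hi))
      have h7 := key _ h6 h5
      have hr8 : r = c * i + (r - c * i) := by ring
      rw [hr8]
      exact add_mem (I.mul_mem_left c hi) h7
  · refine key r hrJ ?_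
    rw [hrcm]
    exact add_mem (Ideal.mul_mem_left _ _ (not_not.1 hγΔ)) hm


include h0 hadd hgen hxe in
lemma repr_unique {p N q : ℕ} (hp : p.Prime) [CharP (ResidueField R) p]
    (hq : q = p ^ N) (hcong : ∀ a b : R, a - b ∈ maximalIdeal R ↔ a ^ q = b ^ q)
    (a b : (Fin μ → ℕ) → R)
    (hsum : ∑ α ∈ delta x mo e, a α ^ q * mon x α = ∑ α ∈ delta x mo e, b α ^ q * mon x α) :
    ∀ α ∈ delta x mo e, a α ^ q = b α ^ q := by
  by_contra hcon
  push_neg at hcon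
  obtain ⟨α0, hα0, hne0⟩ := hcon
  classical
  set S := (delta x mo e).filter (fun α => a α ^ q ≠ b α ^ q) with hS
  have hSne : S.Nonempty := ⟨α0, Finset.mem_filter.2 ⟨hα0, hne0⟩⟩
  letI := mo
  obtain ⟨γ, hγS, hγmin⟩ := Finset.exists_min_image S id hSne
  have hγS' := Finset.mem_filter.1 hγS
  have hγΔ : γ ∈ monDelta x mo := (mem_delta x mo e hxe).1 hγS'.1
  have hzero : ∑ α ∈ delta x mo e, (a α ^ q - b α ^ q) * mon x α = 0 := by
    simp only [sub_mul, Finset.sum_sub_distrib, hsum, sub_self]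
  have hzS : ∑ α ∈ S, (a α ^ q - b α ^ q) * mon x α = 0 := by
    rw [← hzero, hS]
    exact Finset.sum_filter_of_ne fun α _ hfα heq => hfα (by rw [heq, sub_self, zero_mul])
  have hterm : (a γ ^ q - b γ ^ q) * mon x γ ∈ monIdeal x mo γ := by
    have heq : (a γ ^ q - b γ ^ q) * mon x γ =
        - ∑ α ∈ S.erase γ, (a α ^ q - b α ^ q) * mon x α :=
      eq_neg_of_add_eq_zero_left ((Finset.add_sum_erase S _ hγS).trans hzS)
    rw [heq]
    refine neg_mem (Ideal.sum_mem _ fun α hα => Ideal.mul_mem_left _ _ ?_)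
    have hαγ : α ≠ γ := Finset.ne_of_mem_erase hα
    have hαS : α ∈ S := Finset.mem_of_mem_erase hα
    exact mon_mem_monIdeal_of_lt x mo (molt_of_le_ne mo (hγmin α hαS) hαγ.symm)
  have hcm : a γ ^ q - b γ ^ q ∈ maximalIdeal R := by
    by_contra hc
    have hu : IsUnit (a γ ^ q - b γ ^ q) := by
      rwa [IsLocalRing.mem_maximalIdeal, mem_nonunits_iff, not_not] at hc
    exact hγΔ ((Ideal.unit_mul_mem_iff_mem _ hu).1 hterm)
  have h1 : residue R (a γ) ^ q = residue R (b γ) ^ q := by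
    have hres := (residue_eq_zero_iff _).2 hcm
    rw [map_sub, map_pow, map_pow, sub_eq_zero] at hres
    exact hres
  have h2 : residue R (a γ) = residue R (b γ) := by
    haveI : Fact p.Prime := ⟨hp⟩
    have h3 : (residue R (a γ) - residue R (b γ)) ^ q = 0 := by
      rw [hq, sub_pow_char_pow, ← hq, h1, sub_self]
    have hqne : q ≠ 0 := by
      rw [hq]; exact (Nat.pow_pos hp.pos : 0 < p ^ N).ne'
    exact sub_eq_zero.1 ((pow_eq_zero_iff hqne).1 h3)
  have h4 : a γ - b γ ∈ maximalIdeal R := by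
    rw [← residue_eq_zero_iff, map_sub, h2, sub_self]
  exact hγS'.2 ((hcong _ _).1 h4)

include hxe in
lemma monIdeal_strict_anti {α β} (hβ : β ∈ monDelta x mo) (h : mo.lt α β) :
    monIdeal x mo β < monIdeal x mo α := by
  refine lt_of_le_of_ne (monIdeal_mono x mo (mole_of_molt mo h)) fun hEq => hβ ?_
  have hmem : mon x β ∈ monIdeal x mo α := mon_mem_monIdeal_of_lt x mo h
  rw [← hEq] at hmem
  exact hmem

include h0 hadd hgen hxe in
lemma monIdeal_covby {α β} (hα : α ∈ monDelta x mo) (hβ : β ∈ monDelta x mo)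
    (hlt : mo.lt α β) (hbetween : ∀ γ ∈ monDelta x mo, ¬(mo.lt α γ ∧ mo.lt γ β)) :
    monIdeal x mo β ⋖ monIdeal x mo α := by
  have hAα : monIdeal x mo α = Ideal.span {mon x β} ⊔ monIdeal x mo β := by
    rw [monIdeal_eq_spanDelta x mo e hxe α, monIdeal_eq_spanDelta x mo e hxe β,
      ← Ideal.span_union]
    congr 1
    ext r
    simp only [Set.mem_union, Set.mem_singleton_iff, Set.mem_setOf_eq]
    constructor
    · rintro ⟨δ, hδΔ, hδlt, rfl⟩
      have hnlt : ¬ mo.lt δ β := fun hlt' => hbetween δ hδΔ ⟨hδlt, hlt'⟩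
      rcases (mole_iff_lt_or_eq mo).1 (mole_of_not_lt mo hnlt) with h | rfl
      · exact Or.inr ⟨δ, hδΔ, h, rfl⟩
      · exact Or.inl rfl
    · rintro (rfl | ⟨δ, h1, h2, rfl⟩)
      · exact ⟨β, hβ, hlt, rfl⟩
      · exact ⟨δ, h1, molt_trans mo hlt h2, rfl⟩
  refine ⟨monIdeal_strict_anti x mo e hxe hβ hlt, fun K hK1 hK2 => ?_⟩
  obtain ⟨k, hkK, hkA⟩ := SetLike.exists_of_lt hK1
  have hkα : k ∈ monIdeal x mo α := le_of_lt hK2 hkK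
  rw [hAα] at hkα
  obtain ⟨s, hs, m, hm, hsum⟩ := Submodule.mem_sup.1 hkα
  obtain ⟨c, hc⟩ := Ideal.mem_span_singleton'.1 hs
  by_cases hcm : c ∈ maximalIdeal R
  · refine hkA ?_
    rw [← hsum, ← hc]
    exact add_mem (mem_maximalIdeal_mul_mon x mo h0 hadd hgen hcm β) hm
  · have hu : IsUnit c := by
      rwa [IsLocalRing.mem_maximalIdeal, mem_nonunits_iff, not_not] at hcm
    have hmonK : mon x β ∈ K := by
      have h1 : c * mon x β ∈ K := by
        rw [hc, show s = k - m by rw [← hsum]; ring]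
        exact sub_mem hkK (le_of_lt hK1 hm)
      exact (Ideal.unit_mul_mem_iff_mem _ hu).1 h1
    have hle : monIdeal x mo α ≤ K := by
      rw [hAα]
      exact sup_le ((Ideal.span_le).2 (by simpa using hmonK)) (le_of_lt hK1)
    exact absurd (lt_of_lt_of_le hK2 hle) (lt_irrefl _)

/-- the set of `α ∈ Δ` with `x^α ∉ I + 𝔞(α)` -/
noncomputable def DSet (I : Ideal R) : Finset (Fin μ → ℕ) :=
  (delta x mo e).filter (fun α => mon x α ∉ I ⊔ monIdeal x mo α)

include h0 hadd hgen hxe in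
lemma DSet_ssubset {I J : Ideal R} (hIJ : I < J) :
    DSet x mo e J ⊂ DSet x mo e I := by
  constructor
  · intro α hα
    rw [DSet, Finset.mem_filter] at hα ⊢
    exact ⟨hα.1, fun hmem => hα.2 (sup_le_sup_right hIJ.le _ hmem)⟩
  · intro hsub
    have hJI : J ≤ I := by
      intro r hr
      refine sandwich x mo h0 hadd hgen e hxe I J hIJ.le ?_ _ 0 (le_refl _) r hr
        (by rw [monB_zero_eq_top x mo h0]; trivial)
      intro α hαm hJmem
      by_contra hImem
      have h1 : α ∈ DSet x mo e I :=
        Finset.mem_filter.2 ⟨(mem_delta x mo e hxe).2 hαm, hImem⟩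
      have h2 := Finset.mem_filter.1 (hsub h1)
      exact h2.2 hJmem
    exact hIJ.not_ge hJI

include h0 hadd hgen hxe in
lemma series_length_le (p : LTSeries (Ideal R)) : p.length ≤ (delta x mo e).card := by
  have hanti : ∀ i j : Fin (p.length + 1), i < j →
      (DSet x mo e (p j)).card < (DSet x mo e (p i)).card := fun i j h =>
    Finset.card_lt_card (DSet_ssubset x mo h0 hadd hgen e hxe (p.strictMono h))
  have hinj : Function.Injective (fun i : Fin (p.length + 1) =>
      (⟨(DSet x mo e (p i)).card,
        Nat.lt_succ_of_le (Finset.card_le_card (Finset.filter_subset _ _))⟩ :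
        Fin ((delta x mo e).card + 1))) := by
    intro i j hij
    simp only [Fin.mk.injEq] at hij
    rcases lt_trichotomy i j with h | h | h
    · exact absurd hij (hanti i j h).ne'
    · exact h
    · exact absurd hij (hanti j i h).ne
  simpa using Fintype.card_le_of_injective _ hinj

include h0 hadd hgen hxe in
lemma krull_upper : Order.krullDim (Ideal R) ≤ (((delta x mo e).card : ℕ∞) : WithBot ℕ∞) := by
  rw [Order.krullDim_eq_iSup_length]
  rw [WithBot.coe_le_coe]
  exact iSup_le fun p => Nat.cast_le.2 (series_length_le x mo h0 hadd hgen e hxe p)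

include h0 hgen hxe in
lemma exists_series :
    ∃ p : LTSeries (Ideal R), p.length = (delta x mo e).card := by
  letI : DecidableRel mo.le := mo.toDecidableLE
  haveI : IsTrans (Fin μ → ℕ) mo.le := ⟨fun a b c => mo.le_trans a b c⟩
  haveI : Std.Antisymm mo.le := ⟨mo.le_antisymm⟩
  haveI : Std.Total mo.le := ⟨mo.le_total⟩
  have hsorted : List.Pairwise mo.le ((delta x mo e).sort mo.le) :=
    Finset.pairwise_sort _ mo.le
  have hnd : List.Pairwise (fun a b => a ≠ b) ((delta x mo e).sort mo.le) :=
    Finset.sort_nodup _ mo.le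
  have hpair : List.Pairwise mo.lt ((delta x mo e).sort mo.le) :=
    (hsorted.and hnd).imp fun h => molt_of_le_ne mo h.1 h.2
  set L := (((delta x mo e).sort mo.le).reverse.map (monIdeal x mo)) ++ [(⊤ : Ideal R)]
    with hL
  have hchain : L.IsChain (· < ·) := by
    apply List.Pairwise.isChain
    rw [hL, List.pairwise_append]
    refine ⟨?_, List.pairwise_singleton _ _, ?_⟩
    · rw [List.pairwise_map, List.pairwise_reverse]
      refine List.Pairwise.imp_of_mem ?_ hpair
      intro a b _ hb hab
      exact monIdeal_strict_anti x mo e hxe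
        ((mem_delta x mo e hxe).1 ((Finset.mem_sort _).1 hb)) hab
    · intro I hI t ht
      rw [List.mem_singleton] at ht
      subst ht
      rw [List.mem_map] at hI
      obtain ⟨δ, _, rfl⟩ := hI
      exact lt_of_le_of_lt (monIdeal_le_maximalIdeal x mo h0 hgen δ)
        (lt_top_iff_ne_top.2 (Ideal.IsMaximal.ne_top inferInstance))
  refine ⟨RelSeries.fromListIsChain L (by simp [hL]) hchain, ?_⟩
  simp [hL, RelSeries.fromListIsChain]

end nilp
end Stmt16Aux


/-- Let `(R, 𝔪)` be an Artinian local ring of mixed characteristic with algebraically closed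
residue field of characteristic `p`, and let `q = p^N` with `N` sufficiently large (`q = 0` in
`R`, congruence mod `𝔪` is equivalence of `q`-th powers). Fix a minimal system of generators
`x` of `𝔪` and a monomial ordering. Then: (1) every `r ∈ R` is `Σ_{α ∈ Δ} a_α^q x^α` with the
Witt-vector coefficients `a_α^q` uniquely determined (the monomials `x^α`, `α ∈ Δ_R`, form a
Witt base); (2) the ideals `𝔞(α)`, `α ∈ Δ_R`, from the largest to the smallest index, form a
maximal strictly ascending chain of ideals, so `#Δ_R = ℓ(R)`. -/

theorem stmt_16 (R : Type u) [CommRing R] [IsArtinianRing R] [IsLocalRing R]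
    (p : ℕ) (hp : p.Prime) [CharP (ResidueField R) p] (hmix : (p : R) ≠ 0)
    [IsAlgClosed (ResidueField R)]
    (N q : ℕ) (hq : q = p ^ N)
    (hq0 : ((q : ℕ) : R) = 0)
    (hcong : ∀ a b : R, a - b ∈ maximalIdeal R ↔ a ^ q = b ^ q)
    (μ : ℕ) (x : Fin μ → R)
    (hgen : Ideal.span (Set.range x) = maximalIdeal R)
    (hmin : ∀ i, x i ∉ Ideal.span (x '' {j | j ≠ i}))
    (mo : LinearOrder (Fin μ → ℕ))
    (h0 : ∀ α, mo.le 0 α)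
    (hadd : ∀ α β γ : Fin μ → ℕ, mo.le α β → mo.le (α + γ) (β + γ)) :
    ∃ Δfin : Finset (Fin μ → ℕ), (Δfin : Set (Fin μ → ℕ)) = monDelta x mo ∧
      (∀ r : R, ∃ a : (Fin μ → ℕ) → R,
        r = ∑ α ∈ Δfin, a α ^ q * ∏ i, x i ^ α i) ∧
      (∀ a b : (Fin μ → ℕ) → R,
        (∑ α ∈ Δfin, a α ^ q * ∏ i, x i ^ α i) = (∑ α ∈ Δfin, b α ^ q * ∏ i, x i ^ α i) →
        ∀ α ∈ Δfin, a α ^ q = b α ^ q) ∧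
      (∀ α ∈ Δfin, ∀ β ∈ Δfin, mo.lt α β → monIdeal x mo β < monIdeal x mo α) ∧
      (∀ α ∈ Δfin, ∀ β ∈ Δfin, mo.lt α β →
        (∀ γ ∈ Δfin, ¬(mo.lt α γ ∧ mo.lt γ β)) → monIdeal x mo β ⋖ monIdeal x mo α) ∧
      ((Δfin.card : ℕ∞) : WithBot ℕ∞) = ringLength R := by
  classical
  obtain ⟨e, he⟩ := IsArtinianRing.isNilpotent_jacobson_bot (R := R)
  have hm : maximalIdeal R ^ e = ⊥ := by
    rw [← IsLocalRing.jacobson_eq_maximalIdeal (⊥ : Ideal R) bot_ne_top]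
    exact he
  have hxe : ∀ i, x i ^ e = 0 := fun i => by
    have hx : x i ∈ maximalIdeal R := hgen ▸ Ideal.subset_span ⟨i, rfl⟩
    have h2 := Ideal.pow_mem_pow hx e
    rwa [hm, Submodule.mem_bot] at h2
  have hqpos : 0 < q := hq ▸ (Nat.pow_pos hp.pos : 0 < p ^ N)
  refine ⟨Stmt16Aux.delta x mo e, Stmt16Aux.coe_delta x mo e hxe, ?_, ?_, ?_, ?_, ?_⟩
  · intro r
    obtain ⟨a, ha⟩ := Stmt16Aux.repr_exists x mo h0 hadd hgen e hxe hqpos _ 0 (le_refl _) r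
      (by rw [Stmt16Aux.monB_zero_eq_top x mo h0]; trivial)
    refine ⟨a, ?_⟩
    rw [ha, Finset.filter_true_of_mem fun δ _ => h0 δ]
    rfl
  · intro a b hab α hα
    exact Stmt16Aux.repr_unique x mo h0 hadd hgen e hxe hp hq hcong a b hab α hα
  · intro α _ β hβ hlt
    exact Stmt16Aux.monIdeal_strict_anti x mo e hxe
      ((Stmt16Aux.mem_delta x mo e hxe).1 hβ) hlt
  · intro α hα β hβ hlt hbet
    exact Stmt16Aux.monIdeal_covby x mo h0 hadd hgen e hxe
      ((Stmt16Aux.mem_delta x mo e hxe).1 hα) ((Stmt16Aux.mem_delta x mo e hxe).1 hβ) hlt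
      (fun γ hγ => hbet γ ((Stmt16Aux.mem_delta x mo e hxe).2 hγ))
  · show _ = Order.krullDim (Ideal R)
    refine le_antisymm ?_ (Stmt16Aux.krull_upper x mo h0 hadd hgen e hxe)
    obtain ⟨pser, hlen⟩ := Stmt16Aux.exists_series x mo h0 hgen e hxe
    have hb := Order.LTSeries.length_le_krullDim pser
    rw [hlen] at hb
    exact_mod_cast hb
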